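/- Exactness at the grad-div space: let u be a vector field on ℝ³ with polynomial components and let w : ℝ³ → ℝ be a polynomial function. If the vector field v = ∇×u + 𝔭w satisfies ∇·v = 0 everywhere on ℝ³, then w = 0 and hence v = ∇×u. -/

import Mathlib

open MeasureTheory

/-- Divergence of a vector field on ℝ³. -/
noncomputable def pdiv (v : (Fin 3 → ℝ) → (Fin 3 → ℝ)) (x : Fin 3 → ℝ) : ℝ :=
  ∑ i : Fin 3, fderiv ℝ (fun y => v y i) x (Pi.single i 1)

/-- Curl of a vector field on ℝ³. -/
noncomputable def pcurl (v : (Fin 3 → ℝ) → (Fin 3 → ℝ)) (x : Fin 3 → ℝ) : Fin 3 → ℝ :=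
  ![fderiv ℝ (fun y => v y 2) x (Pi.single 1 1) - fderiv ℝ (fun y => v y 1) x (Pi.single 2 1),
    fderiv ℝ (fun y => v y 0) x (Pi.single 2 1) - fderiv ℝ (fun y => v y 2) x (Pi.single 0 1),
    fderiv ℝ (fun y => v y 1) x (Pi.single 0 1) - fderiv ℝ (fun y => v y 0) x (Pi.single 1 1)]

/-- Gradient of a scalar field on ℝ³. -/
noncomputable def pgrad (p : (Fin 3 → ℝ) → ℝ) (x : Fin 3 → ℝ) : Fin 3 → ℝ :=
  fun i => fderiv ℝ p x (Pi.single i 1)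

/-- The Poincaré-type operator 𝔭: (𝔭u)(x) = (∫₀¹ t² u(tx) dt) x. -/
noncomputable def poin (u : (Fin 3 → ℝ) → ℝ) (x : Fin 3 → ℝ) : Fin 3 → ℝ :=
  (∫ t in (0:ℝ)..1, t ^ 2 * u (t • x)) • x

/-- `u` is a polynomial function of total degree at most `r` (P_r = {0} if r < 0). -/
def IsPolyDeg (r : ℤ) (u : (Fin 3 → ℝ) → ℝ) : Prop :=
  ∃ p : MvPolynomial (Fin 3) ℝ, (p = 0 ∨ (p.totalDegree : ℤ) ≤ r) ∧
    ∀ x, MvPolynomial.eval x p = u x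

/-- `v` is a vector field with polynomial components of total degree at most `r`. -/
def IsVecPolyDeg (r : ℤ) (v : (Fin 3 → ℝ) → (Fin 3 → ℝ)) : Prop :=
  ∀ i, IsPolyDeg r fun x => v x i

/-- `u` is a polynomial function. -/
def IsPolyFun (u : (Fin 3 → ℝ) → ℝ) : Prop :=
  ∃ p : MvPolynomial (Fin 3) ℝ, ∀ x, MvPolynomial.eval x p = u x

/-- Membership in S_k = {p ∈ (P̃_k)³ : x·p(x) = 0}. -/
def MemS (k : ℕ) (v : (Fin 3 → ℝ) → (Fin 3 → ℝ)) : Prop :=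
  (∀ i, ∃ p : MvPolynomial (Fin 3) ℝ, p.IsHomogeneous k ∧ ∀ x, MvPolynomial.eval x p = v x i) ∧
    ∀ x, ∑ i : Fin 3, x i * v x i = 0

/-- Membership in the first-family Nédélec space R_k = 𝐏_{k-1} ⊕ S_k. -/
def MemR (k : ℕ) (v : (Fin 3 → ℝ) → (Fin 3 → ℝ)) : Prop :=
  ∃ v₁ v₂, IsVecPolyDeg ((k : ℤ) - 1) v₁ ∧ MemS k v₂ ∧ v = v₁ + v₂

open MvPolynomial

noncomputable def evalD (p : MvPolynomial (Fin 3) ℝ) (x : Fin 3 → ℝ) : (Fin 3 → ℝ) →L[ℝ] ℝ :=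
  ∑ i : Fin 3, eval x (pderiv i p) • (ContinuousLinearMap.proj i : (Fin 3 → ℝ) →L[ℝ] ℝ)

lemma hasFDerivAt_eval (p : MvPolynomial (Fin 3) ℝ) (x : Fin 3 → ℝ) :
    HasFDerivAt (fun y => eval y p) (evalD p x) x := by
  induction p using MvPolynomial.induction_on with
  | C a =>
      have : evalD (C a) x = 0 := by
        simp [evalD, pderiv_C]
      rw [this]
      simpa using (hasFDerivAt_const (𝕜 := ℝ) a x)
  | add p q hp hq =>
      have : evalD (p + q) x = evalD p x + evalD q x := by
        simp [evalD, Finset.sum_add_distrib, add_smul]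
      rw [this]
      exact (hp.add hq).congr_of_eventuallyEq (by filter_upwards with y; simp)
  | mul_X p i hp =>
      have hxi : HasFDerivAt (fun y : Fin 3 → ℝ => y i)
          (ContinuousLinearMap.proj i : (Fin 3 → ℝ) →L[ℝ] ℝ) x :=
        hasFDerivAt_apply i x
      have h : HasFDerivAt (fun y : Fin 3 → ℝ => eval y p * y i) _ x := hp.mul hxi
      have heq : (fun y : Fin 3 → ℝ => eval y p * y i) = fun y => eval y (p * X i) := by
        funext y; simp
      rw [heq] at h
      refine h.congr_fderiv ?_
      ext v
      fin_cases i <;>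
        simp [evalD, pderiv_mul, Fin.sum_univ_three, pderiv_X, Pi.single_apply,
          mul_comm, mul_assoc, mul_left_comm] <;> ring

lemma differentiableAt_eval (p : MvPolynomial (Fin 3) ℝ) (x : Fin 3 → ℝ) :
    DifferentiableAt ℝ (fun y => eval y p) x :=
  (hasFDerivAt_eval p x).differentiableAt

lemma fderiv_eval (p : MvPolynomial (Fin 3) ℝ) (x : Fin 3 → ℝ) (i : Fin 3) :
    fderiv ℝ (fun y => eval y p) x (Pi.single i 1) = eval x (pderiv i p) := by
  rw [(hasFDerivAt_eval p x).fderiv]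
  simp [evalD, Pi.single_apply, Fin.sum_univ_three]
  fin_cases i <;> simp

lemma eval_smul_homog {p : MvPolynomial (Fin 3) ℝ} {n : ℕ} (hp : p.IsHomogeneous n)
    (t : ℝ) (x : Fin 3 → ℝ) : eval (t • x) p = t ^ n * eval x p := by
  rw [eval_eq, eval_eq, Finset.mul_sum]
  refine Finset.sum_congr rfl fun d hd => ?_
  have hdeg : d.degree = n := by
    by_contra h
    exact (mem_support_iff.mp hd) (hp.coeff_eq_zero h)
  have : ∏ i ∈ d.support, (t • x) i ^ d i = t ^ n * ∏ i ∈ d.support, x i ^ d i := by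
    simp only [Pi.smul_apply, smul_eq_mul, mul_pow, Finset.prod_mul_distrib]
    rw [Finset.prod_pow_eq_pow_sum]
    congr 1
    rw [← hdeg]; rfl
  rw [this]; ring

lemma euler {p : MvPolynomial (Fin 3) ℝ} {n : ℕ} (hp : p.IsHomogeneous n) (x : Fin 3 → ℝ) :
    ∑ i : Fin 3, x i * eval x (pderiv i p) = n * eval x p := by
  have h1 : HasDerivAt (fun t : ℝ => eval (t • x) p)
      (∑ i : Fin 3, eval x (pderiv i p) * x i) 1 := by
    have hs : HasDerivAt (fun t : ℝ => t • x) ((1:ℝ) • x) 1 := (hasDerivAt_id 1).smul_const x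
    have := (hasFDerivAt_eval p ((1:ℝ) • x)).comp_hasDerivAt 1 hs
    simp only [one_smul] at this ⊢
    have he : evalD p x x = ∑ i : Fin 3, eval x (pderiv i p) * x i := by
      simp [evalD, Fin.sum_univ_three]
    rw [← he]
    exact this
  have h2 : HasDerivAt (fun t : ℝ => eval (t • x) p) ((n : ℝ) * eval x p) 1 := by
    have : (fun t : ℝ => eval (t • x) p) = fun t : ℝ => t ^ n * eval x p := by
      funext t; exact eval_smul_homog hp t x
    rw [this]
    simpa using (hasDerivAt_pow n (1:ℝ)).mul_const (eval x p)
  have := h1.unique h2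
  rw [← this]
  exact Finset.sum_congr rfl fun i _ => mul_comm _ _

lemma pderiv_comm_aux (i j : Fin 3) (p : MvPolynomial (Fin 3) ℝ) :
    pderiv i (pderiv j p) = pderiv j (pderiv i p) := by
  induction p using MvPolynomial.induction_on' with
  | add p q hp hq => simp [hp, hq]
  | monomial s a =>
      rcases eq_or_ne i j with rfl | hij
      · rfl
      · simp only [pderiv_monomial]
        rw [Finsupp.tsub_apply, Finsupp.tsub_apply, Finsupp.single_eq_of_ne hij,
          Finsupp.single_eq_of_ne (Ne.symm hij)]
        congr 1
        · rw [tsub_tsub, tsub_tsub, add_comm]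
        · simp only [tsub_zero]; ring

/-- if v = ∇×u + 𝔭w is divergence free then w = 0 and v = ∇×u. -/
theorem stmt_12 (u : (Fin 3 → ℝ) → (Fin 3 → ℝ)) (w : (Fin 3 → ℝ) → ℝ)
    (hu : ∀ i, IsPolyFun fun x => u x i) (hw : IsPolyFun w)
    (hdiv : ∀ x, pdiv (fun y => pcurl u y + poin w y) x = 0) :
    (∀ x, w x = 0) ∧ ∀ x, pcurl u x + poin w x = pcurl u x := by
  classical
  obtain ⟨p, hp⟩ := hw
  choose q hq using hu
  set N := p.totalDegree with hN
  set P : MvPolynomial (Fin 3) ℝ :=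
    ∑ k ∈ Finset.range (N + 1), C (((k : ℝ) + 3)⁻¹) * homogeneousComponent k p with hP
  have hint : ∀ x, (∫ t in (0:ℝ)..1, t ^ 2 * w (t • x)) = eval x P := by
    intro x
    have hw' : ∀ t : ℝ, t ^ 2 * w (t • x) =
        ∑ k ∈ Finset.range (N + 1), t ^ (k + 2) * eval x (homogeneousComponent k p) := by
      intro t
      rw [← hp (t • x)]
      conv_lhs => rw [← sum_homogeneousComponent p]
      rw [map_sum, Finset.mul_sum]
      refine Finset.sum_congr rfl fun k _ => ?_
      rw [eval_smul_homog (homogeneousComponent_isHomogeneous k p) t x]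
      ring
    rw [intervalIntegral.integral_congr (g := fun t =>
        ∑ k ∈ Finset.range (N + 1), t ^ (k + 2) * eval x (homogeneousComponent k p))
        (fun t _ => hw' t)]
    rw [intervalIntegral.integral_finset_sum (f := fun k t => t ^ (k + 2) * eval x (homogeneousComponent k p)) (fun k _ =>
      (((continuous_pow (k + 2)).mul continuous_const).intervalIntegrable 0 1))]
    rw [hP, map_sum]
    refine Finset.sum_congr rfl fun k hk => ?_
    rw [intervalIntegral.integral_mul_const, integral_pow, map_mul, eval_C]
    push_cast
    rw [one_pow, zero_pow (by omega), sub_zero]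
    rw [div_eq_mul_inv, one_mul, show ((k:ℝ)+2+1) = (k:ℝ)+3 by ring, mul_comm]
  set c : Fin 3 → MvPolynomial (Fin 3) ℝ :=
    ![pderiv 1 (q 2) - pderiv 2 (q 1), pderiv 2 (q 0) - pderiv 0 (q 2),
      pderiv 0 (q 1) - pderiv 1 (q 0)] with hc
  have hf : ∀ (x : Fin 3 → ℝ) (j m : Fin 3),
      fderiv ℝ (fun y => u y j) x (Pi.single m 1) = eval x (pderiv m (q j)) := by
    intro x j m
    have : (fun y => u y j) = fun y => eval y (q j) := funext fun y => (hq j y).symm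
    rw [this, fderiv_eval]
  have hcurl : ∀ (x : Fin 3 → ℝ) (i : Fin 3), pcurl u x i = eval x (c i) := by
    intro x i
    fin_cases i <;> simp [pcurl, hc, hf, map_sub]
  have hpoin : ∀ (x : Fin 3 → ℝ) (i : Fin 3), poin w x i = eval x (P * X i) := by
    intro x i
    simp only [poin, Pi.smul_apply, smul_eq_mul, map_mul, eval_X, hint x]
  have hvfun : (fun y => pcurl u y + poin w y) = fun y i => eval y (c i + P * X i) := by
    funext y i
    simp only [Pi.add_apply, hcurl, hpoin, map_add]
  have key : ∀ x, pdiv (fun y => pcurl u y + poin w y) x = w x := by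
    intro x
    rw [hvfun]
    unfold pdiv
    have : ∀ i : Fin 3, fderiv ℝ (fun y => eval y (c i + P * X i)) x (Pi.single i 1)
        = eval x (pderiv i (c i)) + eval x (pderiv i (P * X i)) := by
      intro i
      rw [fderiv_eval, map_add, map_add]
    rw [Finset.sum_congr rfl fun i _ => this i, Finset.sum_add_distrib]
    have hcz : ∑ i : Fin 3, eval x (pderiv i (c i)) = 0 := by
      rw [← map_sum]
      have : ∑ i : Fin 3, pderiv i (c i) = 0 := by
        rw [Fin.sum_univ_three]
        simp only [hc, Matrix.cons_val_zero, Matrix.cons_val_one, Matrix.head_cons,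
          Matrix.cons_val_two, Matrix.tail_cons, map_sub]
        rw [pderiv_comm_aux 0 1 (q 2), pderiv_comm_aux 0 2 (q 1), pderiv_comm_aux 1 2 (q 0)]
        ring
      rw [this, map_zero]
    rw [hcz, zero_add]
    have hsp : ∀ i : Fin 3, eval x (pderiv i (P * X i)) =
        x i * eval x (pderiv i P) + eval x P := by
      intro i
      rw [pderiv_mul, pderiv_X_self, mul_one, map_add, map_mul, eval_X]
      ring
    rw [Finset.sum_congr rfl fun i _ => hsp i, Finset.sum_add_distrib]
    have heuler : ∑ i : Fin 3, x i * eval x (pderiv i P) =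
        ∑ k ∈ Finset.range (N + 1),
          ((k : ℝ) + 3)⁻¹ * ((k : ℝ) * eval x (homogeneousComponent k p)) := by
      have hpd : ∀ i : Fin 3, eval x (pderiv i P) =
          ∑ k ∈ Finset.range (N + 1),
            ((k : ℝ) + 3)⁻¹ * eval x (pderiv i (homogeneousComponent k p)) := by
        intro i
        rw [hP, map_sum, map_sum]
        exact Finset.sum_congr rfl fun k _ => by rw [pderiv_C_mul, map_mul, eval_C]
      calc ∑ i : Fin 3, x i * eval x (pderiv i P)
          = ∑ i : Fin 3, ∑ k ∈ Finset.range (N + 1),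
              ((k : ℝ) + 3)⁻¹ * (x i * eval x (pderiv i (homogeneousComponent k p))) := by
            refine Finset.sum_congr rfl fun i _ => ?_
            rw [hpd i, Finset.mul_sum]
            exact Finset.sum_congr rfl fun k _ => by ring
        _ = ∑ k ∈ Finset.range (N + 1), ((k : ℝ) + 3)⁻¹ *
              ∑ i : Fin 3, x i * eval x (pderiv i (homogeneousComponent k p)) := by
            rw [Finset.sum_comm]
            exact Finset.sum_congr rfl fun k _ => by rw [Finset.mul_sum]
        _ = _ := Finset.sum_congr rfl fun k _ => by
              rw [euler (homogeneousComponent_isHomogeneous k p) x]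
    rw [heuler]
    have hPx : eval x P = ∑ k ∈ Finset.range (N + 1),
        ((k : ℝ) + 3)⁻¹ * eval x (homogeneousComponent k p) := by
      rw [hP, map_sum]
      exact Finset.sum_congr rfl fun k _ => by rw [map_mul, eval_C]
    rw [Finset.sum_const, Finset.card_univ, Fintype.card_fin, hPx, Finset.smul_sum,
      ← Finset.sum_add_distrib]
    have : ∀ k ∈ Finset.range (N + 1),
        ((k : ℝ) + 3)⁻¹ * ((k : ℝ) * eval x (homogeneousComponent k p)) +
          (3 : ℕ) • (((k : ℝ) + 3)⁻¹ * eval x (homogeneousComponent k p)) =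
        eval x (homogeneousComponent k p) := by
      intro k _
      have hk3 : ((k : ℝ) + 3) ≠ 0 := by positivity
      rw [nsmul_eq_mul]
      field_simp
      ring
    rw [Finset.sum_congr rfl this, ← map_sum, ← hp x]
    exact congrArg (eval x) (sum_homogeneousComponent p)
  have hwz : ∀ x, w x = 0 := fun x => by rw [← key x, hdiv x]
  have hpz : ∀ x, poin w x = 0 := by
    intro x
    unfold poin
    have : (∫ t in (0:ℝ)..1, t ^ 2 * w (t • x)) = 0 := by
      simp [hwz]
    rw [this, zero_smul]
  exact ⟨hwz, fun x => by rw [hpz x, add_zero]⟩
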